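/- arXiv:1611.06346 — 2 statements merged into one kernel-verified Lean document; each statement's English description precedes it below -/
import Mathlib

section
/- Suppose each fⱼ : ℝⁿ → ℝ is continuous and quasi-homogeneous of type α and order k+αⱼ, and define S(x) = ∑_{j∈I} βⱼ aⱼ xⱼ^{2βⱼ−1} fⱼ(x) and g : ℝⁿ → ℝⁿ by gᵢ(x) = fᵢ(x) − (αᵢ xᵢ / c) · S(x). If J ⊆ ℝ is an interval, x : J → ℝⁿ is differentiable with x'(τ) = g(x(τ)) for all τ ∈ J, and p(x(τ₀)) = 1 for some τ₀ ∈ J, then p(x(τ)) = 1 for all τ ∈ J; i.e., the horizon E = {p(x) = 1} is invariant under the desingularized flow. -/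
open Finset

/-- The quasi-Poincaré functional `p(y) = (∑_{i∈I} aᵢ yᵢ^{2βᵢ})^{1/(2c)}`,
where `I = {i : 0 < αᵢ}`. -/
noncomputable def pF {n : ℕ} (α β : Fin n → ℕ) (a : Fin n → ℝ) (c : ℕ)
    (y : Fin n → ℝ) : ℝ :=
  (∑ i ∈ univ.filter (fun i => 0 < α i), a i * y i ^ (2 * β i)) ^ ((1 : ℝ) / (2 * (c : ℝ)))

/-- For a quasi-homogeneous `f`, the desingularized vector field
`gᵢ(x) = fᵢ(x) − (αᵢ xᵢ / c) S(x)` with `S(x) = ∑_{j∈I} βⱼaⱼ xⱼ^{2βⱼ−1} fⱼ(x)`. -/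
noncomputable def gQH {n : ℕ} (α β : Fin n → ℕ) (a : Fin n → ℝ) (c : ℕ)
    (f : Fin n → (Fin n → ℝ) → ℝ) (x : Fin n → ℝ) : Fin n → ℝ :=
  fun i => f i x - ((α i : ℝ) * x i / (c : ℝ)) *
    ∑ j ∈ univ.filter (fun l => 0 < α l),
      (β j : ℝ) * a j * x j ^ (2 * β j - 1) * f j x

/-- Auxiliary: the `2c`-th power of the quasi-Poincaré functional. -/
noncomputable def QF {n : ℕ} (α β : Fin n → ℕ) (a : Fin n → ℝ) (y : Fin n → ℝ) : ℝ :=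
  ∑ i ∈ univ.filter (fun i => 0 < α i), a i * y i ^ (2 * β i)

/-- Auxiliary: the functional `S(y) = ∑_{j∈I} βⱼ aⱼ yⱼ^{2βⱼ−1} fⱼ(y)`. -/
noncomputable def SF {n : ℕ} (α β : Fin n → ℕ) (a : Fin n → ℝ)
    (f : Fin n → (Fin n → ℝ) → ℝ) (y : Fin n → ℝ) : ℝ :=
  ∑ j ∈ univ.filter (fun l => 0 < α l), (β j : ℝ) * a j * y j ^ (2 * β j - 1) * f j y

/-- A scalar linear ODE with initial value `0` on an order-connected set
has only the zero solution. -/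
lemma linODE_zero {J : Set ℝ} (hJ : J.OrdConnected) (V h : ℝ → ℝ)
    (hVc : ContinuousOn V J) (hhc : ContinuousOn h J)
    (hV' : ∀ τ ∈ J, HasDerivWithinAt V (h τ * V τ) J τ)
    {τ₀ : ℝ} (hτ₀ : τ₀ ∈ J) (h0 : V τ₀ = 0) :
    ∀ τ ∈ J, V τ = 0 := by
  intro τ hτ
  have lip : ∀ (K : NNReal) (m : ℝ), |m| ≤ (K : ℝ) → LipschitzWith K (fun y : ℝ => m * y) := by
    intro K m hm
    apply LipschitzWith.of_dist_le_mul
    intro y z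
    rw [Real.dist_eq, Real.dist_eq, ← mul_sub, abs_mul]
    exact mul_le_mul_of_nonneg_right hm (abs_nonneg _)
  rcases le_total τ₀ τ with hle | hle
  · have hsub : Set.Icc τ₀ τ ⊆ J := hJ.out hτ₀ hτ
    obtain ⟨C, hC⟩ := (isCompact_Icc (a := τ₀) (b := τ)).exists_bound_of_continuousOn
      (hhc.mono hsub)
    set K : NNReal := Real.toNNReal C with hK
    have hCK : C ≤ (K : ℝ) := by rw [hK, Real.coe_toNNReal']; exact le_max_left _ _
    set v : ℝ → ℝ → ℝ := fun t y => h (Set.projIcc τ₀ τ hle t) * y with hv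
    have hvlip : ∀ t, LipschitzOnWith K (v t) Set.univ := by
      intro t
      refine LipschitzWith.lipschitzOnWith (lip K _ ?_)
      calc |h ↑(Set.projIcc τ₀ τ hle t)| ≤ C := by
            simpa [Real.norm_eq_abs] using hC _ (Set.projIcc τ₀ τ hle t).2
        _ ≤ (K : ℝ) := hCK
    have heq : Set.EqOn V (fun _ => (0:ℝ)) (Set.Icc τ₀ τ) := by
      apply ODE_solution_unique_of_mem_Icc_right (fun t _ => hvlip t) (hVc.mono hsub)
      · intro t ht
        have htJ : t ∈ J := hsub ⟨ht.1, ht.2.le⟩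
        have h1 : HasDerivWithinAt V (h t * V t) (Set.Icc t τ) t :=
          (hV' t htJ).mono (fun s hs => hsub ⟨le_trans ht.1 hs.1, hs.2⟩)
        rw [← Set.Ici_inter_Iic] at h1
        have h2 := (hasDerivWithinAt_inter (Iic_mem_nhds ht.2)).mp h1
        have : v t (V t) = h t * V t := by
          rw [hv]; simp [Set.projIcc_of_mem hle ⟨ht.1, ht.2.le⟩]
        rwa [this]
      · exact fun t _ => trivial
      · exact continuousOn_const
      · intro t ht
        have : v t 0 = 0 := by simp [hv]
        rw [this]
        exact hasDerivWithinAt_const _ _ _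
      · exact fun t _ => trivial
      · exact h0
    exact heq ⟨hle, le_refl τ⟩
  · have hsub : Set.Icc τ τ₀ ⊆ J := hJ.out hτ hτ₀
    obtain ⟨C, hC⟩ := (isCompact_Icc (a := τ) (b := τ₀)).exists_bound_of_continuousOn
      (hhc.mono hsub)
    set K : NNReal := Real.toNNReal C with hK
    have hCK : C ≤ (K : ℝ) := by rw [hK, Real.coe_toNNReal']; exact le_max_left _ _
    set v : ℝ → ℝ → ℝ := fun t y => h (Set.projIcc τ τ₀ hle t) * y with hv
    have hvlip : ∀ t, LipschitzOnWith K (v t) Set.univ := by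
      intro t
      refine LipschitzWith.lipschitzOnWith (lip K _ ?_)
      calc |h ↑(Set.projIcc τ τ₀ hle t)| ≤ C := by
            simpa [Real.norm_eq_abs] using hC _ (Set.projIcc τ τ₀ hle t).2
        _ ≤ (K : ℝ) := hCK
    have heq : Set.EqOn V (fun _ => (0:ℝ)) (Set.Icc τ τ₀) := by
      apply ODE_solution_unique_of_mem_Icc_left (fun t _ => hvlip t) (hVc.mono hsub)
      · intro t ht
        have htJ : t ∈ J := hsub ⟨ht.1.le, ht.2⟩
        have h1 : HasDerivWithinAt V (h t * V t) (Set.Icc τ t) t :=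
          (hV' t htJ).mono (fun s hs => hsub ⟨hs.1, le_trans hs.2 ht.2⟩)
        rw [← Set.Ici_inter_Iic, Set.inter_comm] at h1
        have h2 := (hasDerivWithinAt_inter (Ici_mem_nhds ht.1)).mp h1
        have : v t (V t) = h t * V t := by
          rw [hv]; simp [Set.projIcc_of_mem hle ⟨ht.1.le, ht.2⟩]
        rwa [this]
      · exact fun t _ => trivial
      · exact continuousOn_const
      · intro t ht
        have : v t 0 = 0 := by simp [hv]
        rw [this]
        exact hasDerivWithinAt_const _ _ _
      · exact fun t _ => trivial
      · exact h0
    exact heq ⟨le_refl τ, hle⟩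

/-- The key derivative identity: along the desingularized flow,
`(QF ∘ x)' = 2 S (1 − QF)`. -/
lemma QF_hasDeriv {n : ℕ} (α β : Fin n → ℕ) (a : Fin n → ℝ) (c : ℕ)
    (hc : 0 < c) (hαβ : ∀ i, 0 < α i → α i * β i = c)
    (f : Fin n → (Fin n → ℝ) → ℝ)
    (J : Set ℝ) (x : ℝ → Fin n → ℝ)
    (hx : ∀ τ ∈ J, HasDerivWithinAt x (gQH α β a c f (x τ)) J τ) :
    ∀ τ ∈ J, HasDerivWithinAt (fun t => QF α β a (x t))
    ((-2 * SF α β a f (x τ)) * (QF α β a (x τ) - 1)) J τ := by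
  intro τ hτ
  have hβpos : ∀ i ∈ univ.filter (fun i : Fin n => 0 < α i), 1 ≤ β i := by
    intro i hi
    have hαi : 0 < α i := (mem_filter.mp hi).2
    have h := hαβ i hαi
    by_contra hb
    push_neg at hb
    have hb0 : β i = 0 := by omega
    rw [hb0] at h; omega
  have hxi : ∀ i, HasDerivWithinAt (fun t => x t i) (gQH α β a c f (x τ) i) J τ :=
    fun i => hasDerivWithinAt_pi.mp (hx τ hτ) i
  have hsum : HasDerivWithinAt (fun t => QF α β a (x t))
      (∑ i ∈ univ.filter (fun i : Fin n => 0 < α i),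
        a i * (((2 * β i : ℕ) : ℝ) * x τ i ^ (2 * β i - 1) * gQH α β a c f (x τ) i)) J τ := by
    unfold QF
    exact HasDerivWithinAt.fun_sum (fun i _ => (((hxi i).fun_pow _).const_mul _))
  convert hsum using 1
  rw [Finset.sum_congr rfl (g := fun i =>
      2 * ((β i : ℝ) * a i * x τ i ^ (2 * β i - 1) * f i (x τ))
      - 2 * SF α β a f (x τ) * (a i * x τ i ^ (2 * β i))) ?_]
  · rw [Finset.sum_sub_distrib, ← Finset.mul_sum, ← Finset.mul_sum]
    show -2 * SF α β a f (x τ) * (QF α β a (x τ) - 1)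
      = 2 * SF α β a f (x τ) - 2 * SF α β a f (x τ) * QF α β a (x τ)
    ring
  · intro i hi
    have hαi : 0 < α i := (mem_filter.mp hi).2
    have h1 : (α i : ℝ) * (β i : ℝ) = (c : ℝ) := by exact_mod_cast hαβ i hαi
    have hb1 : 1 ≤ β i := hβpos i hi
    have hpow : x τ i ^ (2 * β i - 1) * x τ i = x τ i ^ (2 * β i) := by
      rw [← pow_succ]; congr 1; omega
    have hα0 : (α i : ℝ) ≠ 0 := Nat.cast_ne_zero.mpr hαi.ne'
    have hβ0' : (β i : ℝ) ≠ 0 := Nat.cast_ne_zero.mpr (by omega)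
    simp only [gQH, SF]
    push_cast
    rw [← hpow, ← h1]
    field_simp

/-- `pF y = 1` iff `QF y = 1` (for positive `c` and nonnegative weights). -/
lemma pF_eq_one_iff {n : ℕ} (α β : Fin n → ℕ) (a : Fin n → ℝ) (c : ℕ)
    (hc : 0 < c) (ha : ∀ i, 1 ≤ a i) (y : Fin n → ℝ) :
    pF α β a c y = 1 ↔ QF α β a y = 1 := by
  have hQnn : 0 ≤ QF α β a y := by
    apply Finset.sum_nonneg
    intro i _
    have ha' : (0:ℝ) ≤ a i := le_trans zero_le_one (ha i)
    have : (0:ℝ) ≤ y i ^ (2 * β i) := by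
      rw [mul_comm, pow_mul]
      exact sq_nonneg _
    exact mul_nonneg ha' this
  have hpQ : pF α β a c y = QF α β a y ^ ((1 : ℝ) / (2 * (c : ℝ))) := rfl
  have hc' : (2 * (c : ℝ)) ≠ 0 := mul_ne_zero two_ne_zero (Nat.cast_ne_zero.mpr hc.ne')
  constructor
  · intro h
    rw [hpQ] at h
    have h2 := congrArg (fun z : ℝ => z ^ (2 * (c : ℝ))) h
    simp only [Real.one_rpow] at h2
    rwa [← Real.rpow_mul hQnn, one_div, inv_mul_cancel₀ hc', Real.rpow_one] at h2
  · intro h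
    rw [hpQ, h, Real.one_rpow]

/-- The horizon `E = {p(x) = 1}` is invariant under the desingularized flow:
if each `fⱼ` is continuous and quasi-homogeneous of type `α` and order `k+αⱼ`,
`x : J → ℝⁿ` solves `x' = g(x)` on an interval `J`, and `p(x(τ₀)) = 1` for some
`τ₀ ∈ J`, then `p(x(τ)) = 1` for all `τ ∈ J`. -/
theorem horizon_invariant
    {n : ℕ} (hn : 1 ≤ n) (α β : Fin n → ℕ) (a : Fin n → ℝ) (c : ℕ)
    (hα : ∃ i, 0 < α i) (hc : 0 < c)
    (hαβ : ∀ i, 0 < α i → α i * β i = c)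
    (hβ0 : ∀ i, α i = 0 → β i = 0)
    (ha : ∀ i, 1 ≤ a i)
    (k : ℕ) (hk : 1 ≤ k)
    (f : Fin n → (Fin n → ℝ) → ℝ)
    (hfc : ∀ j, Continuous (f j))
    (hfqh : ∀ (j : Fin n) (x : Fin n → ℝ) (R : ℝ),
      f j (fun i => R ^ (α i) * x i) = R ^ (k + α j) * f j x)
    (J : Set ℝ) (hJ : J.OrdConnected)
    (x : ℝ → Fin n → ℝ)
    (hx : ∀ τ ∈ J, HasDerivWithinAt x (gQH α β a c f (x τ)) J τ)
    (τ₀ : ℝ) (hτ₀ : τ₀ ∈ J) (hp : pF α β a c (x τ₀) = 1) :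
    ∀ τ ∈ J, pF α β a c (x τ) = 1 := by
  have hxc : ContinuousOn x J := fun τ hτ => (hx τ hτ).continuousWithinAt
  have hQcont : Continuous (QF α β a (n := n)) := by
    apply continuous_finset_sum
    intro i _
    exact continuous_const.mul ((continuous_apply i).pow _)
  have hScont : Continuous (SF α β a f (n := n)) := by
    apply continuous_finset_sum
    intro j _
    exact (continuous_const.mul ((continuous_apply j).pow _)).mul (hfc j)
  have hVc : ContinuousOn (fun t => QF α β a (x t) - 1) J :=
    (hQcont.comp_continuousOn hxc).sub continuousOn_const
  have hhc : ContinuousOn (fun t => -2 * SF α β a f (x t)) J :=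
    continuousOn_const.mul (hScont.comp_continuousOn hxc)
  have hV' : ∀ τ ∈ J, HasDerivWithinAt (fun t => QF α β a (x t) - 1)
      ((-2 * SF α β a f (x τ)) * (QF α β a (x τ) - 1)) J τ :=
    fun τ hτ => (QF_hasDeriv α β a c hc hαβ f J x hx τ hτ).sub_const 1
  have h0 : QF α β a (x τ₀) - 1 = 0 := by
    rw [(pF_eq_one_iff α β a c hc ha (x τ₀)).mp hp]; ring
  have hz := linODE_zero hJ (fun t => QF α β a (x t) - 1)
    (fun t => -2 * SF α β a f (x t)) hVc hhc hV' hτ₀ h0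
  intro τ hτ
  rw [pF_eq_one_iff α β a c hc ha (x τ)]
  have h2 : QF α β a (x τ) - 1 = 0 := hz τ hτ
  linarith
end

section
/- Let x : [0,∞) → D̄ be continuous, let x* ∈ E (i.e. p(x*) = 1), and suppose there are constants C, m > 0 with |x(τ) − x*| ≤ C e^{−mτ} for all τ ≥ 0 (exponential convergence to the horizon, as holds for trajectories on the stable manifold of a hyperbolic equilibrium at infinity). Then ∫₀^∞ (1 − p(x(τ))^{2c})^{k/(2c)} dτ < ∞. In particular, if x(τ) ∈ D for all τ and y(τ) = T⁻¹(x(τ)), then the blow-up time t_max := ∫₀^∞ κ(y(τ))^{−k} dτ is finite. -/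
open Finset

/-- The quasi-Poincaré functional `κ(y) = (1 + p(y)^{2c})^{1/(2c)}`. -/
noncomputable def kF {n : ℕ} (α β : Fin n → ℕ) (a : Fin n → ℝ) (c : ℕ)
    (y : Fin n → ℝ) : ℝ :=
  (1 + pF α β a c y ^ (2 * c)) ^ ((1 : ℝ) / (2 * (c : ℝ)))

/-- The quasi-Poincaré compactification `T(y)ᵢ = yᵢ / κ(y)^{αᵢ}`. -/
noncomputable def TqP {n : ℕ} (α β : Fin n → ℕ) (a : Fin n → ℝ) (c : ℕ)
    (y : Fin n → ℝ) : Fin n → ℝ :=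
  fun i => y i / (kF α β a c y) ^ (α i)

/-- Lipschitz bound for natural powers on `[-1,1]`. -/
lemma aux_pow_lip (p : ℕ) (u v : ℝ) (hu : |u| ≤ 1) (hv : |v| ≤ 1) :
    |u ^ p - v ^ p| ≤ p * |u - v| := by
  induction p with
  | zero => simp
  | succ p ih =>
    have key : u ^ (p + 1) - v ^ (p + 1) = u ^ p * (u - v) + v * (u ^ p - v ^ p) := by
      ring
    calc |u ^ (p + 1) - v ^ (p + 1)| ≤ |u ^ p * (u - v)| + |v * (u ^ p - v ^ p)| := by
          rw [key]; exact abs_add_le _ _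
      _ ≤ 1 * |u - v| + 1 * (p * |u - v|) := by
          gcongr
          · rw [abs_mul]
            exact mul_le_mul (by simpa [abs_pow] using pow_le_one₀ (abs_nonneg u) hu)
              le_rfl (abs_nonneg _) zero_le_one
          · rw [abs_mul]
            exact mul_le_mul hv ih (abs_nonneg _) zero_le_one
      _ = ((p + 1 : ℕ) : ℝ) * |u - v| := by push_cast; ring

/-- `pF ^ (2c)` is the defining sum. -/
lemma pF_pow {n : ℕ} (α β : Fin n → ℕ) (a : Fin n → ℝ) (c : ℕ) (hc : 0 < c)
    (ha : ∀ i, 1 ≤ a i) (z : Fin n → ℝ) :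
    pF α β a c z ^ (2 * c) =
      ∑ i ∈ univ.filter (fun i => 0 < α i), a i * z i ^ (2 * β i) := by
  have hS : 0 ≤ ∑ i ∈ univ.filter (fun i => 0 < α i), a i * z i ^ (2 * β i) := by
    refine Finset.sum_nonneg fun i _ => mul_nonneg (le_trans zero_le_one (ha i)) ?_
    exact (even_two_mul (β i)).pow_nonneg _
  have hc' : (2 * (c : ℝ)) ≠ 0 := by positivity
  rw [pF, ← Real.rpow_natCast _ (2 * c), ← Real.rpow_mul hS]
  rw [show ((1 : ℝ) / (2 * (c : ℝ))) * ((2 * c : ℕ) : ℝ) = 1 by push_cast; field_simp]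
  exact Real.rpow_one _

lemma pF_nonneg {n : ℕ} (α β : Fin n → ℕ) (a : Fin n → ℝ) (c : ℕ)
    (ha : ∀ i, 1 ≤ a i) (z : Fin n → ℝ) : 0 ≤ pF α β a c z := by
  refine Real.rpow_nonneg (Finset.sum_nonneg fun i _ => ?_) _
  exact mul_nonneg (le_trans zero_le_one (ha i)) ((even_two_mul (β i)).pow_nonneg _)

/-- Components are bounded by 1 in the closed disk. -/
lemma aux_comp_le {n : ℕ} (α β : Fin n → ℕ) (a : Fin n → ℝ) (c : ℕ) (hc : 0 < c)
    (hαβ : ∀ i, 0 < α i → α i * β i = c) (ha : ∀ i, 1 ≤ a i)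
    (z : Fin n → ℝ) (hz : pF α β a c z ≤ 1)
    (i : Fin n) (hi : 0 < α i) : |z i| ≤ 1 := by
  have hβ : 0 < β i := by
    rcases Nat.eq_zero_or_pos (β i) with h | h
    · exfalso; have := hαβ i hi; rw [h, Nat.mul_zero] at this; omega
    · exact h
  have hsum : ∑ j ∈ univ.filter (fun j => 0 < α j), a j * z j ^ (2 * β j) ≤ 1 := by
    rw [← pF_pow α β a c hc ha z]
    calc pF α β a c z ^ (2 * c) ≤ 1 ^ (2 * c) :=
          pow_le_pow_left₀ (pF_nonneg α β a c ha z) hz _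
      _ = 1 := one_pow _
  have hterm : a i * z i ^ (2 * β i) ≤ 1 := by
    refine le_trans (Finset.single_le_sum (f := fun j => a j * z j ^ (2 * β j))
      (fun j _ => mul_nonneg (le_trans zero_le_one (ha j))
        ((even_two_mul (β j)).pow_nonneg _)) ?_) hsum
    simp [hi]
  have hpow : |z i| ^ (2 * β i) ≤ 1 := by
    have h1 : z i ^ (2 * β i) ≤ 1 := by
      nlinarith [ha i, (even_two_mul (β i)).pow_nonneg (z i)]
    calc |z i| ^ (2 * β i) = |z i ^ (2 * β i)| := (abs_pow _ _).symm
      _ = z i ^ (2 * β i) := abs_of_nonneg ((even_two_mul (β i)).pow_nonneg _)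
      _ ≤ 1 := h1
  have h2β : 2 * β i ≠ 0 := by omega
  by_contra h
  push_neg at h
  exact absurd hpow (not_le.mpr (one_lt_pow₀ h h2β))

/-- Exponential convergence to a point `x*` on the horizon implies finiteness of
`∫₀^∞ (1 − p(x(τ))^{2c})^{k/(2c)} dτ`; in particular, if `x(τ) ∈ D` and
`y = T⁻¹ ∘ x`, the blow-up time `t_max = ∫₀^∞ κ(y(τ))^{−k} dτ` is finite. -/
theorem blowup_time_finite_of_exponential_convergence
    {n : ℕ} (hn : 1 ≤ n) (α β : Fin n → ℕ) (a : Fin n → ℝ) (c : ℕ)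
    (hα : ∃ i, 0 < α i) (hc : 0 < c)
    (hαβ : ∀ i, 0 < α i → α i * β i = c)
    (hβ0 : ∀ i, α i = 0 → β i = 0)
    (ha : ∀ i, 1 ≤ a i)
    (k : ℕ) (hk : 1 ≤ k)
    (x : ℝ → Fin n → ℝ) (hxc : ContinuousOn x (Set.Ici 0))
    (hxD : ∀ τ : ℝ, 0 ≤ τ → pF α β a c (x τ) ≤ 1)
    (xs : Fin n → ℝ) (hxs : pF α β a c xs = 1)
    (C m : ℝ) (hC : 0 < C) (hm : 0 < m)
    (hconv : ∀ τ : ℝ, 0 ≤ τ → ‖x τ - xs‖ ≤ C * Real.exp (-m * τ)) :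
    MeasureTheory.IntegrableOn
      (fun τ : ℝ => (1 - pF α β a c (x τ) ^ (2 * c)) ^ ((k : ℝ) / (2 * (c : ℝ))))
      (Set.Ici 0) ∧
    ∀ y : ℝ → Fin n → ℝ,
      (∀ τ : ℝ, 0 ≤ τ → TqP α β a c (y τ) = x τ) →
      (∀ τ : ℝ, 0 ≤ τ → pF α β a c (x τ) < 1) →
      MeasureTheory.IntegrableOn
        (fun τ : ℝ => (kF α β a c (y τ)) ^ (-(k : ℤ))) (Set.Ici 0) := by
  classical
  set I : Finset (Fin n) := univ.filter (fun i => 0 < α i) with hI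
  set r : ℝ := (k : ℝ) / (2 * (c : ℝ)) with hr
  have hr_pos : 0 < r := by
    apply div_pos
    · exact_mod_cast hk
    · positivity
  set S : (Fin n → ℝ) → ℝ := fun z => ∑ i ∈ I, a i * z i ^ (2 * β i) with hS
  set L : ℝ := ∑ i ∈ I, a i * (2 * β i : ℕ) with hL
  have hL_nonneg : 0 ≤ L := by
    refine Finset.sum_nonneg fun i _ => mul_nonneg (le_trans zero_le_one (ha i)) ?_
    positivity
  -- Sum bound: |S xs - S (x τ)| ≤ L * ‖x τ - xs‖
  have hSxs : S xs = 1 := by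
    rw [hS]
    have := pF_pow α β a c hc ha xs
    rw [hxs, one_pow] at this
    exact this.symm
  have hSle : ∀ τ, 0 ≤ τ → S (x τ) ≤ 1 := by
    intro τ hτ
    rw [hS]
    simp only [hI, ← pF_pow α β a c hc ha (x τ)]
    calc pF α β a c (x τ) ^ (2 * c) ≤ 1 ^ (2 * c) :=
        pow_le_pow_left₀ (pF_nonneg α β a c ha _) (hxD τ hτ) _
      _ = 1 := one_pow _
  have hkey : ∀ τ, 0 ≤ τ → 1 - S (x τ) ≤ L * (C * Real.exp (-m * τ)) := by
    intro τ hτ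
    have hdiff : 1 - S (x τ) = ∑ i ∈ I, a i * (xs i ^ (2 * β i) - x τ i ^ (2 * β i)) := by
      rw [← hSxs, hS]
      rw [← Finset.sum_sub_distrib]
      congr 1; ext i; ring
    rw [hdiff]
    calc ∑ i ∈ I, a i * (xs i ^ (2 * β i) - x τ i ^ (2 * β i))
        ≤ ∑ i ∈ I, a i * ((2 * β i : ℕ) * ‖x τ - xs‖) := by
          refine Finset.sum_le_sum fun i hi => ?_
          have hi' : 0 < α i := by simpa [hI] using hi
          have h1 : |xs i| ≤ 1 := aux_comp_le α β a c hc hαβ ha xs hxs.le i hi'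
          have h2 : |x τ i| ≤ 1 := aux_comp_le α β a c hc hαβ ha (x τ) (hxD τ hτ) i hi'
          refine mul_le_mul_of_nonneg_left ?_ (le_trans zero_le_one (ha i))
          calc xs i ^ (2 * β i) - x τ i ^ (2 * β i)
              ≤ |xs i ^ (2 * β i) - x τ i ^ (2 * β i)| := le_abs_self _
            _ ≤ (2 * β i : ℕ) * |xs i - x τ i| := aux_pow_lip _ _ _ h1 h2
            _ ≤ (2 * β i : ℕ) * ‖x τ - xs‖ := by
                gcongr
                rw [abs_sub_comm]
                calc |x τ i - xs i| = ‖(x τ - xs) i‖ := by simp [Real.norm_eq_abs]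
                  _ ≤ ‖x τ - xs‖ := norm_le_pi_norm _ i
      _ = L * ‖x τ - xs‖ := by rw [hL, Finset.sum_mul]; congr 1; ext i; ring
      _ ≤ L * (C * Real.exp (-m * τ)) :=
          mul_le_mul_of_nonneg_left (hconv τ hτ) hL_nonneg
  -- reduce the integrand to `(1 - S (x τ)) ^ r`
  have hfeq : ∀ τ : ℝ, (1 - pF α β a c (x τ) ^ (2 * c)) ^ r = (1 - S (x τ)) ^ r := by
    intro τ; rw [pF_pow α β a c hc ha]
  -- integrability of the first function
  have hfirst : MeasureTheory.IntegrableOn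
      (fun τ : ℝ => (1 - pF α β a c (x τ) ^ (2 * c)) ^ r) (Set.Ici 0) := by
    -- continuity
    have hSc : Continuous S := by
      rw [hS]
      exact continuous_finset_sum _ fun i _ =>
        (continuous_const.mul ((continuous_apply i).pow _))
    have hScont : ContinuousOn (fun τ => S (x τ)) (Set.Ici 0) :=
      hSc.comp_continuousOn hxc
    have hfcont : ContinuousOn
        (fun τ : ℝ => (1 - pF α β a c (x τ) ^ (2 * c)) ^ r) (Set.Ici 0) := by
      have : ContinuousOn (fun τ : ℝ => (1 - S (x τ)) ^ r) (Set.Ici 0) :=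
        (Real.continuous_rpow_const hr_pos.le).comp_continuousOn
          (continuousOn_const.sub hScont)
      exact this.congr fun τ _ => hfeq τ
    -- dominating function
    have hgint : MeasureTheory.IntegrableOn
        (fun τ : ℝ => (L * C) ^ r * Real.exp (-(m * r) * τ)) (Set.Ici 0) := by
      rw [integrableOn_Ici_iff_integrableOn_Ioi]
      exact (exp_neg_integrableOn_Ioi 0 (by positivity)).const_mul _
    refine MeasureTheory.Integrable.mono' hgint
      (hfcont.aestronglyMeasurable measurableSet_Ici) ?_
    rw [MeasureTheory.ae_restrict_iff' measurableSet_Ici]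
    refine MeasureTheory.ae_of_all _ fun τ hτ => ?_
    have hτ' : (0:ℝ) ≤ τ := hτ
    have h0 : 0 ≤ 1 - S (x τ) := by linarith [hSle τ hτ']
    rw [hfeq τ, Real.norm_eq_abs, abs_of_nonneg (Real.rpow_nonneg h0 _)]
    calc (1 - S (x τ)) ^ r ≤ (L * (C * Real.exp (-m * τ))) ^ r :=
        Real.rpow_le_rpow h0 (hkey τ hτ') hr_pos.le
      _ = (L * C) ^ r * (Real.exp (-m * τ)) ^ r := by
          rw [← mul_assoc, Real.mul_rpow (by positivity) (Real.exp_nonneg _)]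
      _ = (L * C) ^ r * Real.exp (-(m * r) * τ) := by
          congr 1
          rw [← Real.exp_mul]
          congr 1
          ring
  refine ⟨hfirst, ?_⟩
  -- second part
  intro y hy hlt
  have heq : ∀ τ ∈ Set.Ici (0:ℝ),
      (1 - pF α β a c (x τ) ^ (2 * c)) ^ r = (kF α β a c (y τ)) ^ (-(k : ℤ)) := by
    intro τ hτ
    have hτ' : (0:ℝ) ≤ τ := hτ
    set P2 : ℝ := pF α β a c (y τ) ^ (2 * c) with hP2
    have hP2nn : 0 ≤ P2 := pow_nonneg (pF_nonneg α β a c ha _) _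
    set K : ℝ := kF α β a c (y τ) with hK
    have hKpos : 0 < K := by
      rw [hK, kF]
      positivity
    have hK2c : K ^ (2 * c) = 1 + P2 := by
      rw [hK, kF, ← Real.rpow_natCast _ (2*c), ← Real.rpow_mul (by linarith)]
      rw [show ((1 : ℝ) / (2 * (c : ℝ))) * ((2 * c : ℕ) : ℝ) = 1 by
        push_cast; field_simp]
      exact Real.rpow_one _
    -- compute S (x τ)
    have hSx : S (x τ) = (P2 / K ^ (2 * c)) * 1 := by
      rw [hS, ← hy τ hτ']
      rw [hP2, pF_pow α β a c hc ha]
      rw [Finset.sum_div, Finset.sum_mul]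
      refine Finset.sum_congr rfl fun i hi => ?_
      have hi' : 0 < α i := by simpa [hI] using hi
      simp only [TqP]
      rw [div_pow, mul_div_assoc]
      have : (kF α β a c (y τ) ^ α i) ^ (2 * β i) = K ^ (2 * c) := by
        rw [← pow_mul, ← hK]
        congr 1
        have := hαβ i hi'
        calc α i * (2 * β i) = 2 * (α i * β i) := by ring
          _ = 2 * c := by rw [this]
      rw [this]
      ring
    have hSx' : 1 - S (x τ) = 1 / K ^ (2 * c) := by
      rw [hSx, mul_one, hK2c]
      have h1P2 : (0:ℝ) < 1 + P2 := by linarith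
      field_simp
      ring
    rw [hfeq τ, hSx']
    -- (1 / K^{2c}) ^ r = K ^ (-k)
    have hKpow : (0:ℝ) < K ^ (2 * c) := pow_pos hKpos _
    rw [one_div, ← Real.rpow_natCast K (2 * c), ← Real.rpow_neg hKpos.le,
      ← Real.rpow_mul hKpos.le]
    rw [show (-((2 * c : ℕ) : ℝ)) * r = -(k : ℝ) by
      rw [hr]; push_cast; field_simp]
    rw [show (-(k:ℝ)) = ((-(k:ℤ) : ℤ) : ℝ) by push_cast; ring]
    exact Real.rpow_intCast K _
  exact (MeasureTheory.IntegrableOn.congr_fun hfirst heq measurableSet_Ici)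
end
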